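/- Let S ≥ 1/2 with 2S ∈ ℕ and n, ℓ ≥ 1. For every permutation-symmetric Ψ: {1,…,ℓ}^n → ℂ, the Heisenberg energy form satisfies E_{ℓ,n}(Ψ) ≥ (S/2) ∑_{X,Y ∈ 𝒳_{ℓ,n}, |X−Y|₁ = 1} |Ψ(X) − Ψ(Y)|², where 𝒳_{ℓ,n} = { X ∈ {1,…,ℓ}^n : x_i ≠ x_j for all i ≠ j } and |X−Y|₁ = ∑_{i=1}^n |x_i − y_i|. -/
import Mathlib


open scoped BigOperators

noncomputable section

/-- The spin value `S = twoS / 2`. -/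
def Sval (twoS : ℕ) : ℝ := twoS / 2

/-- The occupation number `n_x(X) = #{j : x_j = x}` of the site `x` in the
configuration `X` (sites are labelled `0, …, ℓ−1`). -/
def occ {n ℓ : ℕ} (X : Fin n → Fin ℓ) (x : ℕ) : ℕ :=
  (Finset.univ.filter fun j => (X j : ℕ) = x).card

/-- Permutation symmetry of an `n`-particle wave function. -/
def SymmFun {n ℓ : ℕ} (Ψ : (Fin n → Fin ℓ) → ℂ) : Prop :=
  ∀ (π : Equiv.Perm (Fin n)) (X : Fin n → Fin ℓ), Ψ (X ∘ π) = Ψ X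

/-- The square root factor `√([1 − #{k ≠ j : x_k = x}/(2S)]₊)` (note that `Real.sqrt`
of a negative number is `0`, which implements the positive part). -/
def hopCoeff (twoS : ℕ) {n ℓ : ℕ} (X : Fin n → Fin ℓ) (j : Fin n) (x : ℕ) : ℝ :=
  Real.sqrt (1 - ((Finset.univ.filter fun k => k ≠ j ∧ (X k : ℕ) = x).card : ℝ) / (twoS : ℝ))

/-- The Heisenberg energy form `E_{ℓ,n}(Ψ)` in the Holstein–Primakoff representation. -/
def Eform (twoS : ℕ) {n ℓ : ℕ} (Ψ : (Fin n → Fin ℓ) → ℂ) : ℝ :=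
  Sval twoS * ∑ j : Fin n, ∑ X : Fin n → Fin ℓ,
    if h : (X j : ℕ) + 1 < ℓ then
      ‖Ψ (Function.update X j ⟨(X j : ℕ) + 1, h⟩) * (hopCoeff twoS X j (X j : ℕ) : ℂ)
        - Ψ X * (hopCoeff twoS X j ((X j : ℕ) + 1) : ℂ)‖ ^ 2
    else 0

/-- The two-particle density `ρ(x,y) = ⟨Ψ, a†_x a†_y a_y a_x Ψ⟩`; for a permutation
symmetric normalized `Ψ` this equals `n(n−1) ∑_{x₃,…,x_n} |Ψ(x,y,x₃,…,x_n)|²`. -/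
def rho2 {n ℓ : ℕ} (Ψ : (Fin n → Fin ℓ) → ℂ) (x y : ℕ) : ℝ :=
  ∑ X : Fin n → Fin ℓ, ‖Ψ X‖ ^ 2 *
    ((Finset.univ.filter fun p : Fin n × Fin n =>
        p.1 ≠ p.2 ∧ (X p.1 : ℕ) = x ∧ (X p.2 : ℕ) = y).card : ℝ)

/-! ### Auxiliary machinery for the proof -/

open scoped Classical

/-- Successor on `Fin ℓ`, staying put at the top site. -/
def nxtF {ℓ : ℕ} (x : Fin ℓ) : Fin ℓ := if h : (x : ℕ) + 1 < ℓ then ⟨(x : ℕ) + 1, h⟩ else x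

/-- The configuration `X + δ_j` (with a junk value when the hop is not allowed). -/
def updP {n ℓ : ℕ} (X : Fin n → Fin ℓ) (j : Fin n) : Fin n → Fin ℓ :=
  Function.update X j (nxtF (X j))

/-- The hop `(j, X) ↦ X + δ_j` is admissible in the hard-core sense. -/
def Qp {n ℓ : ℕ} (X : Fin n → Fin ℓ) (j : Fin n) : Prop :=
  (X j : ℕ) + 1 < ℓ ∧ Function.Injective X ∧ Function.Injective (updP X j)

/-- `Y` is obtained from `X` by raising one coordinate, both hard-core admissible. -/
def Pp {n ℓ : ℕ} (X Y : Fin n → Fin ℓ) : Prop :=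
  Function.Injective X ∧ Function.Injective Y ∧ ∃ j, (X j : ℕ) + 1 < ℓ ∧ Y = updP X j

lemma updP_self {n ℓ : ℕ} (X : Fin n → Fin ℓ) (j : Fin n) (h : (X j : ℕ) + 1 < ℓ) :
    (updP X j j : ℕ) = (X j : ℕ) + 1 := by
  simp [updP, nxtF, h]

lemma updP_ne {n ℓ : ℕ} (X : Fin n → Fin ℓ) {i j : Fin n} (hij : i ≠ j) :
    updP X j i = X i :=
  Function.update_of_ne hij _ _

lemma Pp_asymm {n ℓ : ℕ} {X Y : Fin n → Fin ℓ} (h : Pp X Y) : ¬ Pp Y X := by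
  rintro ⟨-, -, k, hk, hXe⟩
  obtain ⟨-, -, j, hj, hYe⟩ := h
  rcases eq_or_ne j k with rfl | hjk
  · have h1 : (Y j : ℕ) = (X j : ℕ) + 1 := by rw [hYe]; exact updP_self X j hj
    have h2 : (X j : ℕ) = (Y j : ℕ) + 1 := by rw [hXe]; exact updP_self Y j hk
    omega
  · have h1 : (Y j : ℕ) = (X j : ℕ) + 1 := by rw [hYe]; exact updP_self X j hj
    have h2 : X j = Y j := by rw [hXe]; exact updP_ne Y hjk
    rw [h2] at h1; omega

lemma cond_iff {n ℓ : ℕ} (X Y : Fin n → Fin ℓ) :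
    (Function.Injective X ∧ Function.Injective Y ∧
        (∑ i : Fin n, (((X i : ℕ) : ℤ) - ((Y i : ℕ) : ℤ)).natAbs) = 1) ↔
      Pp X Y ∨ Pp Y X := by
  constructor
  · rintro ⟨hX, hY, hsum⟩
    obtain ⟨i₀, -, hi₀⟩ :=
      Finset.exists_ne_zero_of_sum_ne_zero
        (f := fun i => (((X i : ℕ) : ℤ) - ((Y i : ℕ) : ℤ)).natAbs)
        (by rw [hsum]; exact one_ne_zero)
    have hsplit : (((X i₀ : ℕ) : ℤ) - ((Y i₀ : ℕ) : ℤ)).natAbs +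
        ∑ i ∈ Finset.univ.erase i₀, (((X i : ℕ) : ℤ) - ((Y i : ℕ) : ℤ)).natAbs = 1 := by
      exact (Finset.add_sum_erase _ _ (Finset.mem_univ i₀)).trans hsum
    obtain ⟨r, hr⟩ : ∃ r, ∑ i ∈ Finset.univ.erase i₀,
        (((X i : ℕ) : ℤ) - ((Y i : ℕ) : ℤ)).natAbs = r := ⟨_, rfl⟩
    rw [hr] at hsplit
    have ht0 : (((X i₀ : ℕ) : ℤ) - ((Y i₀ : ℕ) : ℤ)).natAbs = 1 := by omega
    have hrest : ∑ i ∈ Finset.univ.erase i₀,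
        (((X i : ℕ) : ℤ) - ((Y i : ℕ) : ℤ)).natAbs = 0 := by rw [hr]; omega
    have heq : ∀ i, i ≠ i₀ → X i = Y i := by
      intro i hi
      have h0 : (((X i : ℕ) : ℤ) - ((Y i : ℕ) : ℤ)).natAbs = 0 :=
        (Finset.sum_eq_zero_iff.mp hrest) i (Finset.mem_erase.mpr ⟨hi, Finset.mem_univ i⟩)
      exact Fin.ext (by omega)
    rcases Int.natAbs_eq_iff.mp ht0 with hpos | hneg
    · -- X i₀ = Y i₀ + 1 : X = updP Y i₀, so Pp Y X
      right
      have hv : (X i₀ : ℕ) = (Y i₀ : ℕ) + 1 := by omega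
      have hlt : (Y i₀ : ℕ) + 1 < ℓ := by rw [← hv]; exact (X i₀).isLt
      refine ⟨hY, hX, i₀, hlt, ?_⟩
      funext i
      rcases eq_or_ne i i₀ with rfl | hi
      · exact Fin.ext (by rw [updP_self Y i hlt, hv])
      · rw [updP_ne Y hi]; exact heq i hi
    · -- Y i₀ = X i₀ + 1 : Y = updP X i₀, so Pp X Y
      left
      have hv : (Y i₀ : ℕ) = (X i₀ : ℕ) + 1 := by omega
      have hlt : (X i₀ : ℕ) + 1 < ℓ := by rw [← hv]; exact (Y i₀).isLt
      refine ⟨hX, hY, i₀, hlt, ?_⟩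
      funext i
      rcases eq_or_ne i i₀ with rfl | hi
      · exact Fin.ext (by rw [updP_self X i hlt, hv])
      · rw [updP_ne X hi]; exact (heq i hi).symm
  · have key : ∀ (X Y : Fin n → Fin ℓ), Pp X Y →
        (∑ i : Fin n, (((X i : ℕ) : ℤ) - ((Y i : ℕ) : ℤ)).natAbs) = 1 := by
      rintro X Y ⟨hX, hY, j, hj, rfl⟩
      rw [Finset.sum_eq_single j (fun i _ hi => by rw [updP_ne X hi]; simp)
        (fun h => absurd (Finset.mem_univ j) h)]
      rw [updP_self X j hj]
      omega
    rintro (h | h)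
    · exact ⟨h.1, h.2.1, key X Y h⟩
    · refine ⟨h.2.1, h.1, ?_⟩
      have := key Y X h
      rw [← this]
      apply Finset.sum_congr rfl
      intro i _
      omega

lemma sum_Pp_eq {n ℓ : ℕ} (Ψ : (Fin n → Fin ℓ) → ℂ) (X : Fin n → Fin ℓ) :
    (∑ Y : Fin n → Fin ℓ, if Pp X Y then ‖Ψ X - Ψ Y‖ ^ 2 else 0) =
      ∑ j : Fin n, if Qp X j then ‖Ψ X - Ψ (updP X j)‖ ^ 2 else 0 := by
  rw [← Finset.sum_filter, ← Finset.sum_filter]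
  refine (Finset.sum_bij (fun j _ => updP X j) ?_ ?_ ?_ ?_).symm
  · intro j hj
    obtain ⟨-, hlt, hX, hU⟩ := Finset.mem_filter.mp hj
    exact Finset.mem_filter.mpr ⟨Finset.mem_univ _, hX, hU, j, hlt, rfl⟩
  · intro j₁ h₁ j₂ h₂ he
    by_contra hne
    have hj₁ : (X j₁ : ℕ) + 1 < ℓ := ((Finset.mem_filter.mp h₁).2).1
    have e1 : (updP X j₁ j₁ : ℕ) = (X j₁ : ℕ) + 1 := updP_self X j₁ hj₁
    have e2 : updP X j₂ j₁ = X j₁ := updP_ne X hne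
    have he' : updP X j₁ = updP X j₂ := he
    rw [he', e2] at e1
    omega
  · intro Y hY
    obtain ⟨-, hX, hYi, j, hj, rfl⟩ := Finset.mem_filter.mp hY
    exact ⟨j, Finset.mem_filter.mpr ⟨Finset.mem_univ _, hj, hX, hYi⟩, rfl⟩
  · intro j _; rfl

lemma term_bound (twoS : ℕ) {n ℓ : ℕ} (Ψ : (Fin n → Fin ℓ) → ℂ)
    (j : Fin n) (X : Fin n → Fin ℓ) :
    (if Qp X j then ‖Ψ X - Ψ (updP X j)‖ ^ 2 else 0) ≤
      if h : (X j : ℕ) + 1 < ℓ then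
        ‖Ψ (Function.update X j ⟨(X j : ℕ) + 1, h⟩) * (hopCoeff twoS X j (X j : ℕ) : ℂ)
          - Ψ X * (hopCoeff twoS X j ((X j : ℕ) + 1) : ℂ)‖ ^ 2
      else 0 := by
  by_cases hQ : Qp X j
  · obtain ⟨hlt, hX, hU⟩ := hQ
    rw [if_pos ⟨hlt, hX, hU⟩, dif_pos hlt]
    have hupd : Function.update X j ⟨(X j : ℕ) + 1, hlt⟩ = updP X j := by
      unfold updP nxtF
      rw [dif_pos hlt]
    have hc1 : hopCoeff twoS X j (X j : ℕ) = 1 := by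
      unfold hopCoeff
      have hempty : (Finset.univ.filter fun k => k ≠ j ∧ (X k : ℕ) = (X j : ℕ)) = ∅ := by
        ext k
        simp only [Finset.mem_filter, Finset.mem_univ, true_and, Finset.notMem_empty,
          iff_false, not_and]
        intro hk hval
        exact hk (hX (Fin.ext hval))
      rw [hempty]
      simp
    have hc2 : hopCoeff twoS X j ((X j : ℕ) + 1) = 1 := by
      unfold hopCoeff
      have hempty : (Finset.univ.filter fun k => k ≠ j ∧ (X k : ℕ) = (X j : ℕ) + 1) = ∅ := by
        ext k
        simp only [Finset.mem_filter, Finset.mem_univ, true_and, Finset.notMem_empty,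
          iff_false, not_and]
        intro hk hval
        have : updP X j k = updP X j j := by
          apply Fin.ext
          rw [updP_self X j hlt, updP_ne X hk]
          exact hval
        exact hk (hU this)
      rw [hempty]
      simp
    rw [hupd, hc1, hc2]
    apply le_of_eq
    rw [norm_sub_rev]
    push_cast
    rw [mul_one, mul_one]
  · rw [if_neg hQ]
    split_ifs with h
    · positivity
    · exact le_rfl

/-- Lower bound of the Heisenberg energy form by the hard-core
hopping energy on configurations with pairwise distinct coordinates. -/
theorem energy_form_hardcore_lower_bound (twoS : ℕ) (hS : 1 ≤ twoS)
    {n ℓ : ℕ} (hn : 1 ≤ n) (hℓ : 1 ≤ ℓ)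
    (Ψ : (Fin n → Fin ℓ) → ℂ) (hΨ : SymmFun Ψ) :
    Sval twoS / 2 * ∑ X : Fin n → Fin ℓ, ∑ Y : Fin n → Fin ℓ,
        (if Function.Injective X ∧ Function.Injective Y ∧
            (∑ i : Fin n, (((X i : ℕ) : ℤ) - ((Y i : ℕ) : ℤ)).natAbs) = 1
          then ‖Ψ X - Ψ Y‖ ^ 2 else 0) ≤
      Eform twoS Ψ := by
  classical
  have hSnn : (0 : ℝ) ≤ Sval twoS := by unfold Sval; positivity
  set A : ℝ := ∑ X : Fin n → Fin ℓ, ∑ Y : Fin n → Fin ℓ,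
      (if Pp X Y then ‖Ψ X - Ψ Y‖ ^ 2 else 0) with hA
  have hsplit : (∑ X : Fin n → Fin ℓ, ∑ Y : Fin n → Fin ℓ,
        (if Function.Injective X ∧ Function.Injective Y ∧
            (∑ i : Fin n, (((X i : ℕ) : ℤ) - ((Y i : ℕ) : ℤ)).natAbs) = 1
          then ‖Ψ X - Ψ Y‖ ^ 2 else 0)) = A + A := by
    have step1 : ∀ X Y : Fin n → Fin ℓ,
        (if Function.Injective X ∧ Function.Injective Y ∧
            (∑ i : Fin n, (((X i : ℕ) : ℤ) - ((Y i : ℕ) : ℤ)).natAbs) = 1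
          then ‖Ψ X - Ψ Y‖ ^ 2 else 0) =
        (if Pp X Y then ‖Ψ X - Ψ Y‖ ^ 2 else 0) +
          (if Pp Y X then ‖Ψ X - Ψ Y‖ ^ 2 else 0) := by
      intro X Y
      by_cases h1 : Pp X Y
      · rw [if_pos ((cond_iff X Y).mpr (Or.inl h1)), if_pos h1,
          if_neg (Pp_asymm h1), add_zero]
      · by_cases h2 : Pp Y X
        · rw [if_pos ((cond_iff X Y).mpr (Or.inr h2)), if_neg h1, if_pos h2, zero_add]
        · rw [if_neg (fun h => ((cond_iff X Y).mp h).elim h1 h2), if_neg h1, if_neg h2,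
            add_zero]
    calc (∑ X : Fin n → Fin ℓ, ∑ Y : Fin n → Fin ℓ,
            (if Function.Injective X ∧ Function.Injective Y ∧
                (∑ i : Fin n, (((X i : ℕ) : ℤ) - ((Y i : ℕ) : ℤ)).natAbs) = 1
              then ‖Ψ X - Ψ Y‖ ^ 2 else 0))
        = ∑ X : Fin n → Fin ℓ, ∑ Y : Fin n → Fin ℓ,
            ((if Pp X Y then ‖Ψ X - Ψ Y‖ ^ 2 else 0) +
              (if Pp Y X then ‖Ψ X - Ψ Y‖ ^ 2 else 0)) := by
          exact Finset.sum_congr rfl fun X _ => Finset.sum_congr rfl fun Y _ => step1 X Y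
      _ = A + ∑ X : Fin n → Fin ℓ, ∑ Y : Fin n → Fin ℓ,
            (if Pp Y X then ‖Ψ X - Ψ Y‖ ^ 2 else 0) := by
          rw [hA, ← Finset.sum_add_distrib]
          exact Finset.sum_congr rfl fun X _ => Finset.sum_add_distrib
      _ = A + A := by
          congr 1
          rw [Finset.sum_comm, hA]
          exact Finset.sum_congr rfl fun X _ => Finset.sum_congr rfl fun Y _ => by
            rw [norm_sub_rev]
  rw [hsplit]
  have hAle : A ≤ ∑ j : Fin n, ∑ X : Fin n → Fin ℓ,
      if h : (X j : ℕ) + 1 < ℓ then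
        ‖Ψ (Function.update X j ⟨(X j : ℕ) + 1, h⟩) * (hopCoeff twoS X j (X j : ℕ) : ℂ)
          - Ψ X * (hopCoeff twoS X j ((X j : ℕ) + 1) : ℂ)‖ ^ 2
      else 0 := by
    have hA2 : A = ∑ j : Fin n, ∑ X : Fin n → Fin ℓ,
        (if Qp X j then ‖Ψ X - Ψ (updP X j)‖ ^ 2 else 0) := by
      rw [hA]
      rw [show (∑ X : Fin n → Fin ℓ, ∑ Y : Fin n → Fin ℓ,
            (if Pp X Y then ‖Ψ X - Ψ Y‖ ^ 2 else 0)) =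
          ∑ X : Fin n → Fin ℓ, ∑ j : Fin n,
            (if Qp X j then ‖Ψ X - Ψ (updP X j)‖ ^ 2 else 0) from
        Finset.sum_congr rfl fun X _ => sum_Pp_eq Ψ X]
      exact Finset.sum_comm
    rw [hA2]
    exact Finset.sum_le_sum fun j _ =>
      Finset.sum_le_sum fun X _ => term_bound twoS Ψ j X
  calc Sval twoS / 2 * (A + A) = Sval twoS * A := by ring
    _ ≤ Eform twoS Ψ := by
        unfold Eform
        exact mul_le_mul_of_nonneg_left hAle hSnn

end
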